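/- Let n ≥ 2 and let σ : ℤ → ℤ be an n-periodic bijection whose length ℓ(σ) = Σ_{1 ≤ i < j ≤ n} |⌊(σ(j)-σ(i))/n⌋| is minimal among all n-periodic bijections σ' with σ'(i) ≡ σ(i) (mod n) for all i. Then for all pairs 1 ≤ i < j ≤ n, ⌊(σ(j)-σ(i))/n⌋ ∈ {−1, 0, 1}. -/

import Mathlib

/-- Shi length statistic of an n-periodic bijection. -/
noncomputable def affineLength (n : ℤ) (σ : ℤ → ℤ) : ℤ :=
  ∑ i ∈ Finset.Icc (1 : ℤ) n, ∑ j ∈ Finset.Icc (1 : ℤ) n,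
    if i < j then |Int.fdiv (σ j - σ i) n| else 0

/- Auxiliary material -/

lemma key_abs1 (s u v : ℤ) (hs : s = 1 ∨ s = -1) (h : s * (u - v) ≤ -1) :
    |u + s| + |v - s| ≤ |u| + |v| := by
  rcases hs with rfl | rfl <;> simp only [Int.abs_eq_natAbs] <;> omega

lemma key_abs2 (s u v : ℤ) (hs : s = 1 ∨ s = -1) (h : 1 ≤ s * (u + v)) :
    |u - s| + |v - s| ≤ |u| + |v| := by
  rcases hs with rfl | rfl <;> simp only [Int.abs_eq_natAbs] <;> omega

lemma habs_gen (s d : ℤ) (hs : s = 1 ∨ s = -1) (h : 2 ≤ s * d) : |d - 2*s| ≤ |d| - 2 := by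
  rcases hs with rfl | rfl <;> simp only [Int.abs_eq_natAbs] <;> omega

lemma ediv_add_bounds (n x y : ℤ) (hn : 0 < n) :
    x / n + y / n ≤ (x + y) / n ∧ (x + y) / n ≤ x / n + y / n + 1 := by
  have hx := Int.mul_ediv_add_emod x n
  have hy := Int.mul_ediv_add_emod y n
  have hxy := Int.mul_ediv_add_emod (x + y) n
  have h1 : 0 ≤ x % n := Int.emod_nonneg x hn.ne'
  have h2 : 0 ≤ y % n := Int.emod_nonneg y hn.ne'
  have h3 : 0 ≤ (x + y) % n := Int.emod_nonneg _ hn.ne'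
  have h4 : x % n < n := Int.emod_lt_of_pos x hn
  have h5 : y % n < n := Int.emod_lt_of_pos y hn
  have h6 : (x + y) % n < n := Int.emod_lt_of_pos _ hn
  have hk : n * ((x + y)/n - x/n - y/n) = x % n + y % n - (x + y) % n := by
    linear_combination hxy - hx - hy
  constructor
  · by_contra hc; push_neg at hc
    have h7 : n * ((x + y)/n - x/n - y/n) ≤ n * (-1) :=
      mul_le_mul_of_nonneg_left (by omega) hn.le
    linarith
  · by_contra hc; push_neg at hc
    have h7 : n * 2 ≤ n * ((x + y)/n - x/n - y/n) :=
      mul_le_mul_of_nonneg_left (by omega) hn.le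
    linarith

/-- Shift the residue class of `p` up by `s*n` and that of `q` down by `s*n`. -/
def twist (n p q s x : ℤ) : ℤ :=
  if (x - p) % n = 0 then x + s * n else if (x - q) % n = 0 then x - s * n else x

lemma twist_emod (n p q s x : ℤ) : twist n p q s x % n = x % n := by
  unfold twist; split_ifs with h1 h2
  · exact Int.add_mul_emod_self_right ..
  · rw [show x - s*n = x + (-s)*n by ring]; exact Int.add_mul_emod_self_right ..
  · rfl

lemma twist_shift (n p q s x : ℤ) : twist n p q s (x + n) = twist n p q s x + n := by
  unfold twist
  have e1 : (x + n - p) % n = (x - p) % n := by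
    rw [show x + n - p = (x - p) + 1*n by ring, Int.add_mul_emod_self_right]
  have e2 : (x + n - q) % n = (x - q) % n := by
    rw [show x + n - q = (x - q) + 1*n by ring, Int.add_mul_emod_self_right]
  simp only [e1, e2]
  split_ifs <;> ring

lemma twist_twist (n p q s x : ℤ) : twist n p q (-s) (twist n p q s x) = x := by
  unfold twist
  by_cases h1 : (x - p) % n = 0
  · simp only [if_pos h1]
    have e1 : (x + s*n - p) % n = (x - p) % n := by
      rw [show x + s*n - p = (x - p) + s*n by ring, Int.add_mul_emod_self_right]
    simp only [e1, if_pos h1]; ring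
  · simp only [if_neg h1]
    by_cases h2 : (x - q) % n = 0
    · simp only [if_pos h2]
      have e1 : (x - s*n - p) % n = (x - p) % n := by
        rw [show x - s*n - p = (x - p) + (-s)*n by ring, Int.add_mul_emod_self_right]
      have e2 : (x - s*n - q) % n = (x - q) % n := by
        rw [show x - s*n - q = (x - q) + (-s)*n by ring, Int.add_mul_emod_self_right]
      simp only [e1, e2, if_neg h1, if_pos h2]; ring
    · simp only [if_neg h2, if_neg h1]

/-- Summand of the length statistic, with euclidean division. -/
def gfun (n : ℤ) (τ : ℤ → ℤ) (a b : ℤ) : ℤ := if a < b then |(τ b - τ a) / n| else 0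

lemma affineLength_eq (n : ℤ) (hn : 0 ≤ n) (τ : ℤ → ℤ) :
    affineLength n τ = ∑ a ∈ Finset.Icc (1:ℤ) n, ∑ b ∈ Finset.Icc (1:ℤ) n, gfun n τ a b := by
  unfold affineLength gfun
  simp only [show ∀ a : ℤ, Int.fdiv a n = a / n from fun a => Int.fdiv_eq_ediv_of_nonneg a hn]

/-- If σ has minimal length among all n-periodic bijections representing the same
circular permutation, then all crossing numbers lie in {−1, 0, 1}. -/
theorem stmt_5 (n : ℤ) (hn : 2 ≤ n) (σ : ℤ → ℤ)
    (hbij : Function.Bijective σ) (hper : ∀ i : ℤ, σ (i + n) = σ i + n)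
    (hmin : ∀ σ' : ℤ → ℤ, Function.Bijective σ' → (∀ i : ℤ, σ' (i + n) = σ' i + n) →
      (∀ i : ℤ, σ' i ≡ σ i [ZMOD n]) → affineLength n σ ≤ affineLength n σ')
    (i j : ℤ) (hi : 1 ≤ i) (hij : i < j) (hj : j ≤ n) :
    Int.fdiv (σ j - σ i) n = -1 ∨ Int.fdiv (σ j - σ i) n = 0 ∨
      Int.fdiv (σ j - σ i) n = 1 := by
  have hn0 : (0:ℤ) < n := by omega
  have hfd : Int.fdiv (σ j - σ i) n = (σ j - σ i) / n := Int.fdiv_eq_ediv_of_nonneg _ (by omega)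
  rw [hfd]
  by_contra hcon
  push_neg at hcon
  obtain ⟨hc1, hc2, hc3⟩ := hcon
  obtain ⟨D, hD⟩ : ∃ D : ℤ, (σ j - σ i) / n = D := ⟨_, rfl⟩
  rw [hD] at hc1 hc2 hc3
  obtain ⟨s, hs, hsd⟩ : ∃ s : ℤ, (s = 1 ∨ s = -1) ∧ 2 ≤ s * D := by
    rcases le_or_gt 2 D with h | h
    · exact ⟨1, Or.inl rfl, by linarith⟩
    · exact ⟨-1, Or.inr rfl, by omega⟩
  -- basic consequences of the size of the crossing number
  have hd1 : s = 1 → 2 * n ≤ σ j - σ i := by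
    rintro rfl
    have h2 : 2 ≤ (σ j - σ i) / n := by rw [hD]; linarith
    have h3 := (Int.le_ediv_iff_mul_le hn0).1 h2
    linarith
  have hd2 : s = -1 → σ j - σ i ≤ -n - 1 := by
    rintro rfl
    have h2 : (σ j - σ i) / n ≤ -2 := by rw [hD]; linarith
    have h3 := Int.lt_ediv_add_one_mul_self (σ j - σ i) hn0
    have h4 : ((σ j - σ i)/n + 1) * n ≤ (-1) * n :=
      mul_le_mul_of_nonneg_right (by omega) hn0.le
    have h5 : σ j - σ i < -n := by linarith
    omega
  -- periodicity for all multiples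
  have hneg : ∀ k : ℤ, σ (k - n) = σ k - n := by
    intro k; have h := hper (k - n); rw [sub_add_cancel] at h; linarith
  have hpermul : ∀ t k : ℤ, σ (k + t * n) = σ k + t * n := by
    intro t
    induction t using Int.induction_on with
    | zero => intro k; simp
    | succ m ih =>
        intro k
        have e : k + ((m:ℤ) + 1) * n = (k + (m:ℤ) * n) + n := by ring
        rw [e, hper, ih]; ring
    | pred m ih =>
        intro k
        have e : k + (-(m:ℤ) - 1) * n = (k + (-(m:ℤ)) * n) - n := by ring
        rw [e, hneg, ih]; ring
  -- distinct positions in [1,n] have distinct residues of values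
  have hA : ∀ k m : ℤ, 1 ≤ k → k ≤ n → 1 ≤ m → m ≤ n → ((σ k - σ m) % n = 0 ↔ k = m) := by
    intro k m hk1 hk2 hm1 hm2
    constructor
    · intro h
      obtain ⟨t, ht⟩ := Int.dvd_of_emod_eq_zero h
      have hk : k = m + t * n := hbij.injective (by rw [hpermul t m]; linarith)
      rcases lt_trichotomy t 0 with h' | h' | h'
      · have h8 : t * n ≤ (-1) * n := mul_le_mul_of_nonneg_right (by omega) hn0.le
        linarith
      · subst h'; omega
      · have h8 : 1 * n ≤ t * n := mul_le_mul_of_nonneg_right (by omega) hn0.le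
        linarith
    · rintro rfl; simp
  -- the modified permutation
  set σ' : ℤ → ℤ := (twist n (σ i) (σ j) s) ∘ σ with hσ'
  have hbij' : Function.Bijective σ' := by
    refine Function.Bijective.comp ?_ hbij
    refine Function.bijective_iff_has_inverse.2
      ⟨twist n (σ i) (σ j) (-s), fun x => twist_twist n (σ i) (σ j) s x, fun x => ?_⟩
    have h := twist_twist n (σ i) (σ j) (-s) x
    rwa [neg_neg] at h
  have hper' : ∀ k : ℤ, σ' (k + n) = σ' k + n := by
    intro k
    rw [hσ']
    simp only [Function.comp_apply]
    rw [hper, twist_shift]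
  have hcong : ∀ k : ℤ, σ' k ≡ σ k [ZMOD n] := by
    intro k
    rw [hσ']
    exact twist_emod n (σ i) (σ j) s (σ k)
  -- values of σ' on [1, n]
  have hvi : σ' i = σ i + s * n := by
    rw [hσ']; simp only [Function.comp_apply]; unfold twist
    rw [if_pos (by simp)]
  have hvj : σ' j = σ j - s * n := by
    have h1 : ¬ (σ j - σ i) % n = 0 := by
      rw [hA j i (by omega) hj hi (by omega)]; omega
    rw [hσ']; simp only [Function.comp_apply]; unfold twist
    rw [if_neg h1, if_pos (by simp)]
  have hvo : ∀ a : ℤ, 1 ≤ a → a ≤ n → a ≠ i → a ≠ j → σ' a = σ a := by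
    intro a h1 h2 h3 h4
    have hni : ¬ (σ a - σ i) % n = 0 := by
      rw [hA a i h1 h2 hi (by omega)]; exact h3
    have hnj : ¬ (σ a - σ j) % n = 0 := by
      rw [hA a j h1 h2 (by omega) hj]; exact h4
    rw [hσ']; simp only [Function.comp_apply]; unfold twist
    rw [if_neg hni, if_neg hnj]
  -- decomposition of sums over [1, n]
  have hiS : i ∈ Finset.Icc (1:ℤ) n := Finset.mem_Icc.2 ⟨hi, by omega⟩
  have hjS' : j ∈ (Finset.Icc (1:ℤ) n).erase i :=
    Finset.mem_erase.2 ⟨by omega, Finset.mem_Icc.2 ⟨by omega, hj⟩⟩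
  have decompose : ∀ f : ℤ → ℤ, ∑ a ∈ Finset.Icc (1:ℤ) n, f a =
      f i + (f j + ∑ a ∈ ((Finset.Icc (1:ℤ) n).erase i).erase j, f a) := by
    intro f
    rw [← Finset.add_sum_erase _ f hiS, ← Finset.add_sum_erase _ f hjS']
  have comb : ∀ τ : ℤ → ℤ,
      (∑ a ∈ ((Finset.Icc (1:ℤ) n).erase i).erase j, gfun n τ i a) +
      ((∑ a ∈ ((Finset.Icc (1:ℤ) n).erase i).erase j, gfun n τ j a) +
       ∑ a ∈ ((Finset.Icc (1:ℤ) n).erase i).erase j,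
         (gfun n τ a i + (gfun n τ a j +
           ∑ b ∈ ((Finset.Icc (1:ℤ) n).erase i).erase j, gfun n τ a b))) =
      ∑ a ∈ ((Finset.Icc (1:ℤ) n).erase i).erase j,
        (gfun n τ i a + (gfun n τ j a + (gfun n τ a i + (gfun n τ a j +
          ∑ b ∈ ((Finset.Icc (1:ℤ) n).erase i).erase j, gfun n τ a b)))) := by
    intro τ
    rw [← Finset.sum_add_distrib, ← Finset.sum_add_distrib]
  -- the per-row inequality
  have per_a : ∀ a ∈ ((Finset.Icc (1:ℤ) n).erase i).erase j,
      gfun n σ' i a + (gfun n σ' j a + (gfun n σ' a i + (gfun n σ' a j +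
        ∑ b ∈ ((Finset.Icc (1:ℤ) n).erase i).erase j, gfun n σ' a b))) ≤
      gfun n σ i a + (gfun n σ j a + (gfun n σ a i + (gfun n σ a j +
        ∑ b ∈ ((Finset.Icc (1:ℤ) n).erase i).erase j, gfun n σ a b))) := by
    intro a ha
    obtain ⟨haj, ha2⟩ := Finset.mem_erase.1 ha
    obtain ⟨hai, ha3⟩ := Finset.mem_erase.1 ha2
    obtain ⟨ha1, han⟩ := Finset.mem_Icc.1 ha3
    have hva : σ' a = σ a := hvo a ha1 han hai haj
    have hinner : ∑ b ∈ ((Finset.Icc (1:ℤ) n).erase i).erase j, gfun n σ' a b =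
        ∑ b ∈ ((Finset.Icc (1:ℤ) n).erase i).erase j, gfun n σ a b := by
      refine Finset.sum_congr rfl fun b hb => ?_
      obtain ⟨hbj, hb2⟩ := Finset.mem_erase.1 hb
      obtain ⟨hbi, hb3⟩ := Finset.mem_erase.1 hb2
      obtain ⟨hb1, hbn⟩ := Finset.mem_Icc.1 hb3
      simp only [gfun, hva, hvo b hb1 hbn hbi hbj]
    rw [hinner]
    rcases lt_trichotomy a i with hlt | heq | hgt
    · -- a < i < j
      have z1 : gfun n σ' i a = 0 := by simp only [gfun]; rw [if_neg (by omega)]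
      have z2 : gfun n σ i a = 0 := by simp only [gfun]; rw [if_neg (by omega)]
      have z3 : gfun n σ' j a = 0 := by simp only [gfun]; rw [if_neg (by omega)]
      have z4 : gfun n σ j a = 0 := by simp only [gfun]; rw [if_neg (by omega)]
      have w1 : gfun n σ' a i = |(σ i - σ a)/n + s| := by
        simp only [gfun]
        rw [if_pos hlt, hvi, hva, show σ i + s*n - σ a = (σ i - σ a) + s*n by ring,
          Int.add_mul_ediv_right _ _ hn0.ne']
      have w2 : gfun n σ a i = |(σ i - σ a)/n| := by simp only [gfun]; rw [if_pos hlt]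
      have w3 : gfun n σ' a j = |(σ j - σ a)/n - s| := by
        simp only [gfun]
        rw [if_pos (by omega : a < j), hvj, hva,
          show σ j - s*n - σ a = (σ j - σ a) + (-s)*n by ring,
          Int.add_mul_ediv_right _ _ hn0.ne',
          show (σ j - σ a)/n + -s = (σ j - σ a)/n - s by ring]
      have w4 : gfun n σ a j = |(σ j - σ a)/n| := by
        simp only [gfun]; rw [if_pos (by omega : a < j)]
      have hcond : s * ((σ i - σ a)/n - (σ j - σ a)/n) ≤ -1 := by
        rcases hs with rfl | rfl
        · have hq := hd1 rfl
          have hmono := Int.ediv_le_ediv hn0 (show (σ i - σ a) + 2*n ≤ σ j - σ a by linarith)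
          rw [Int.add_mul_ediv_right _ _ hn0.ne'] at hmono
          linarith
        · have hq := hd2 rfl
          have hmono := Int.ediv_le_ediv hn0 (show (σ j - σ a) + 1*n ≤ σ i - σ a by linarith)
          rw [Int.add_mul_ediv_right _ _ hn0.ne'] at hmono
          linarith
      have hkey := key_abs1 s ((σ i - σ a)/n) ((σ j - σ a)/n) hs hcond
      rw [z1, z2, z3, z4, w1, w2, w3, w4]
      linarith
    · exact absurd heq hai
    · rcases lt_trichotomy a j with hlt2 | heq2 | hgt2
      · -- i < a < j
        have z1 : gfun n σ' a i = 0 := by simp only [gfun]; rw [if_neg (by omega)]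
        have z2 : gfun n σ a i = 0 := by simp only [gfun]; rw [if_neg (by omega)]
        have z3 : gfun n σ' j a = 0 := by simp only [gfun]; rw [if_neg (by omega)]
        have z4 : gfun n σ j a = 0 := by simp only [gfun]; rw [if_neg (by omega)]
        have w1 : gfun n σ' i a = |(σ a - σ i)/n - s| := by
          simp only [gfun]
          rw [if_pos hgt, hvi, hva, show σ a - (σ i + s*n) = (σ a - σ i) + (-s)*n by ring,
            Int.add_mul_ediv_right _ _ hn0.ne',
            show (σ a - σ i)/n + -s = (σ a - σ i)/n - s by ring]
        have w2 : gfun n σ i a = |(σ a - σ i)/n| := by simp only [gfun]; rw [if_pos hgt]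
        have w3 : gfun n σ' a j = |(σ j - σ a)/n - s| := by
          simp only [gfun]
          rw [if_pos hlt2, hvj, hva, show σ j - s*n - σ a = (σ j - σ a) + (-s)*n by ring,
            Int.add_mul_ediv_right _ _ hn0.ne',
            show (σ j - σ a)/n + -s = (σ j - σ a)/n - s by ring]
        have w4 : gfun n σ a j = |(σ j - σ a)/n| := by simp only [gfun]; rw [if_pos hlt2]
        have hcond : 1 ≤ s * ((σ a - σ i)/n + (σ j - σ a)/n) := by
          rcases hs with rfl | rfl
          · have hsup := (ediv_add_bounds n (σ a - σ i) (σ j - σ a) hn0).2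
            rw [show (σ a - σ i) + (σ j - σ a) = σ j - σ i by ring] at hsup
            have h2 : 2 ≤ (σ j - σ i)/n := by rw [hD]; linarith
            linarith
          · have hsub := (ediv_add_bounds n (σ a - σ i) (σ j - σ a) hn0).1
            rw [show (σ a - σ i) + (σ j - σ a) = σ j - σ i by ring] at hsub
            have h2 : (σ j - σ i)/n ≤ -2 := by rw [hD]; linarith
            linarith
        have hkey := key_abs2 s ((σ a - σ i)/n) ((σ j - σ a)/n) hs hcond
        rw [z1, z2, z3, z4, w1, w2, w3, w4]
        linarith
      · exact absurd heq2 haj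
      · -- i < j < a
        have z1 : gfun n σ' a i = 0 := by simp only [gfun]; rw [if_neg (by omega)]
        have z2 : gfun n σ a i = 0 := by simp only [gfun]; rw [if_neg (by omega)]
        have z3 : gfun n σ' a j = 0 := by simp only [gfun]; rw [if_neg (by omega)]
        have z4 : gfun n σ a j = 0 := by simp only [gfun]; rw [if_neg (by omega)]
        have w1 : gfun n σ' i a = |(σ a - σ i)/n - s| := by
          simp only [gfun]
          rw [if_pos hgt, hvi, hva, show σ a - (σ i + s*n) = (σ a - σ i) + (-s)*n by ring,
            Int.add_mul_ediv_right _ _ hn0.ne',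
            show (σ a - σ i)/n + -s = (σ a - σ i)/n - s by ring]
        have w2 : gfun n σ i a = |(σ a - σ i)/n| := by simp only [gfun]; rw [if_pos hgt]
        have w3 : gfun n σ' j a = |(σ a - σ j)/n + s| := by
          simp only [gfun]
          rw [if_pos hgt2, hvj, hva, show σ a - (σ j - s*n) = (σ a - σ j) + s*n by ring,
            Int.add_mul_ediv_right _ _ hn0.ne']
        have w4 : gfun n σ j a = |(σ a - σ j)/n| := by simp only [gfun]; rw [if_pos hgt2]
        have hcond : s * ((σ a - σ j)/n - (σ a - σ i)/n) ≤ -1 := by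
          rcases hs with rfl | rfl
          · have hq := hd1 rfl
            have hmono := Int.ediv_le_ediv hn0
              (show (σ a - σ j) + 2*n ≤ σ a - σ i by linarith)
            rw [Int.add_mul_ediv_right _ _ hn0.ne'] at hmono
            linarith
          · have hq := hd2 rfl
            have hmono := Int.ediv_le_ediv hn0
              (show (σ a - σ i) + 1*n ≤ σ a - σ j by linarith)
            rw [Int.add_mul_ediv_right _ _ hn0.ne'] at hmono
            linarith
        have hkey := key_abs1 s ((σ a - σ j)/n) ((σ a - σ i)/n) hs hcond
        rw [z1, z2, z3, z4, w1, w2, w3, w4]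
        linarith
  -- assembling the length comparison
  have key : (∑ a ∈ Finset.Icc (1:ℤ) n, ∑ b ∈ Finset.Icc (1:ℤ) n, gfun n σ' a b) ≤
      (∑ a ∈ Finset.Icc (1:ℤ) n, ∑ b ∈ Finset.Icc (1:ℤ) n, gfun n σ a b) - 2 := by
    simp only [decompose]
    have e1 : gfun n σ' i i = 0 := by simp [gfun]
    have e2 : gfun n σ i i = 0 := by simp [gfun]
    have e3 : gfun n σ' j j = 0 := by simp [gfun]
    have e4 : gfun n σ j j = 0 := by simp [gfun]
    have e5 : gfun n σ' j i = 0 := by simp only [gfun]; rw [if_neg (by omega)]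
    have e6 : gfun n σ j i = 0 := by simp only [gfun]; rw [if_neg (by omega)]
    have e7 : gfun n σ' i j = |(σ j - σ i)/n - 2*s| := by
      simp only [gfun]
      rw [if_pos hij, hvi, hvj,
        show σ j - s*n - (σ i + s*n) = (σ j - σ i) + (-(2*s))*n by ring,
        Int.add_mul_ediv_right _ _ hn0.ne',
        show (σ j - σ i)/n + -(2*s) = (σ j - σ i)/n - 2*s by ring]
    have e8 : gfun n σ i j = |(σ j - σ i)/n| := by simp only [gfun]; rw [if_pos hij]
    have habs : |(σ j - σ i)/n - 2*s| ≤ |(σ j - σ i)/n| - 2 := by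
      rw [hD]; exact habs_gen s D hs hsd
    have H2 := Finset.sum_le_sum per_a
    linarith [comb σ', comb σ, H2, e1, e2, e3, e4, e5, e6, e7, e8, habs]
  have h1 := hmin σ' hbij' hper' hcong
  rw [affineLength_eq n (by omega) σ, affineLength_eq n (by omega) σ'] at h1
  linarith
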